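/- There exists a constant C>0 such that for every λ>0, every s>0 and every regular solution v of the auxiliary degenerate problem with right-hand side h ∈ L²(Q), setting w = e^{sφ} v, one has −s ∬_Q a φ_x a_x w_x² ≥ −K λ s ∫₀ᵀ ∫₀^{α'} a σ w_x² − C λ s ∬_{(0,T)×ω'} σ w_x². -/

import Mathlib

open MeasureTheory Set Real Filter

noncomputable section

/-- The sup norm of `ψ` on `[0,1]`. -/
def psiSup (ψ : ℝ → ℝ) : ℝ := ⨆ x : Icc (0:ℝ) 1, |ψ x.1|

/-- `Θ(t) = 1/(t(T-t))⁴`. -/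
def thetaFun (T t : ℝ) : ℝ := 1 / (t * (T - t)) ^ 4

/-- `η(x) = exp (λ(‖ψ‖_∞ + ψ x))`. -/
def etaFun (ψ : ℝ → ℝ) (lam x : ℝ) : ℝ := exp (lam * (psiSup ψ + ψ x))

/-- `σ(t,x) = Θ(t) η(x)`. -/
def sigmaFun (T : ℝ) (ψ : ℝ → ℝ) (lam t x : ℝ) : ℝ := thetaFun T t * etaFun ψ lam x

/-- `φ(t,x) = Θ(t) (exp (λ(‖ψ‖_∞ + ψ x)) - exp (3λ‖ψ‖_∞))`. -/
def phiFun (T : ℝ) (ψ : ℝ → ℝ) (lam t x : ℝ) : ℝ :=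
  thetaFun T t * (etaFun ψ lam x - exp (3 * (lam * psiSup ψ)))

/-- Partial derivative in the space variable. -/
def pderivX (f : ℝ → ℝ → ℝ) (t x : ℝ) : ℝ := deriv (fun y => f t y) x

/-- Partial derivative in the time variable. -/
def pderivT (f : ℝ → ℝ → ℝ) (t x : ℝ) : ℝ := deriv (fun τ => f τ x) t

/-- `w = e^{sφ} v`. -/
def wFun (T : ℝ) (ψ : ℝ → ℝ) (lam s : ℝ) (v : ℝ → ℝ → ℝ) (t x : ℝ) : ℝ :=
  exp (s * phiFun T ψ lam t x) * v t x

/-- The cylinder `(0,T) × (l,r)`. -/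
def QSub (T l r : ℝ) : Set (ℝ × ℝ) := Ioo 0 T ×ˢ Ioo l r

/-- Structural hypotheses on the degenerate coefficient `a` (whose derivative on `(0,1]`
is the given function `a'`): `a ∈ C([0,1]) ∩ C¹((0,1])` is nondecreasing, `a(0) = 0` and
`a > 0` on `(0,1]`. -/
structure DegenCoeff (a a' : ℝ → ℝ) : Prop where
  cont : ContinuousOn a (Icc 0 1)
  hasDeriv : ∀ x ∈ Ioc (0:ℝ) 1, HasDerivAt a (a' x) x
  contDeriv : ContinuousOn a' (Ioc 0 1)
  mono : MonotoneOn a (Icc 0 1)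
  zero : a 0 = 0
  pos : ∀ x ∈ Ioc (0:ℝ) 1, 0 < a x

/-- Weak degeneracy: `x a'(x) ≤ K a(x)` on `(0,1]` with `K ∈ [0,1)`. -/
def DegenWeak (a a' : ℝ → ℝ) (K : ℝ) : Prop :=
  0 ≤ K ∧ K < 1 ∧ ∀ x ∈ Ioc (0:ℝ) 1, x * a' x ≤ K * a x

/-- Strong degeneracy: `x a'(x) ≤ K a(x)` on `(0,1]` with `K ∈ [1,2)`, together with the
additional condition `θ a ≤ x a'` near zero, with `θ ∈ (1,K]` if `K > 1` and `θ ∈ (0,1)`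
if `K = 1`. -/
def DegenStrong (a a' : ℝ → ℝ) (K : ℝ) : Prop :=
  1 ≤ K ∧ K < 2 ∧ (∀ x ∈ Ioc (0:ℝ) 1, x * a' x ≤ K * a x) ∧
    ∃ θ δ : ℝ, 0 < δ ∧ δ ≤ 1 ∧ (∀ x ∈ Ioc (0:ℝ) δ, θ * a x ≤ x * a' x) ∧
      (1 < K → 1 < θ ∧ θ ≤ K) ∧ (K = 1 → 0 < θ ∧ θ < 1)

/-- The weight function `ψ ∈ C²([0,1])`, equal to `∫₀ˣ y/a(y) dy` on `[0, l)` and to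
`-∫_r^x y/a(y) dy` on `[r, 1]`. -/
structure WeightPsi (a : ℝ → ℝ) (l r : ℝ) (ψ : ℝ → ℝ) : Prop where
  smooth : ContDiffOn ℝ 2 ψ (Icc 0 1)
  left : ∀ x ∈ Ico (0:ℝ) l, ψ x = ∫ y in (0:ℝ)..x, y / a y
  right : ∀ x ∈ Icc r 1, ψ x = -∫ y in r..x, y / a y

/-- A regular solution of `v_t + (a v_x)_x = rhs` in `Q = (0,T)×(0,1)` with `v(t,1) = 0`:
`v, v_x` are continuous on `[0,T]×(0,1]`, `v_t, (a v_x)_x` are continuous on `(0,T)×(0,1]`. -/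
structure RegSol (T : ℝ) (a : ℝ → ℝ) (rhs : ℝ → ℝ → ℝ) (v : ℝ → ℝ → ℝ) : Prop where
  contV : ContinuousOn (fun p : ℝ × ℝ => v p.1 p.2) (Icc 0 T ×ˢ Ioc 0 1)
  contVx : ContinuousOn (fun p : ℝ × ℝ => pderivX v p.1 p.2) (Icc 0 T ×ˢ Ioc 0 1)
  contVt : ContinuousOn (fun p : ℝ × ℝ => pderivT v p.1 p.2) (Ioo 0 T ×ˢ Ioc 0 1)
  contAVxx : ContinuousOn
      (fun p : ℝ × ℝ => pderivX (fun t x => a x * pderivX v t x) p.1 p.2)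
      (Ioo 0 T ×ˢ Ioc 0 1)
  eq : ∀ t ∈ Ioo 0 T, ∀ x ∈ Ioo (0:ℝ) 1,
      pderivT v t x + pderivX (fun t x => a x * pderivX v t x) t x = rhs t x
  bdryOne : ∀ t ∈ Ioo 0 T, v t 1 = 0

/-- Dirichlet boundary condition at `x = 0` (weak degeneracy case). -/
def BdryWeak (T : ℝ) (v : ℝ → ℝ → ℝ) : Prop := ∀ t ∈ Ioo 0 T, v t 0 = 0

/-- Boundary condition `(a v_x)(t,0) = 0` at `x = 0` (strong degeneracy case),
understood as a one-sided limit. -/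
def BdryStrong (T : ℝ) (a : ℝ → ℝ) (v : ℝ → ℝ → ℝ) : Prop :=
  ∀ t ∈ Ioo 0 T, Tendsto (fun x => a x * pderivX v t x)
    (nhdsWithin 0 (Ioi 0)) (nhds 0)

end

section Aux

open intervalIntegral Topology

/-- Splitting a set integral over a product with an interval at an interior point. -/
lemma integral_split_mid (f : ℝ × ℝ → ℝ) (A : Set ℝ) (hA : MeasurableSet A)
    {l m r : ℝ} (hlm : l < m) (hmr : m < r)
    (hf : IntegrableOn f (A ×ˢ Ioo l r)) :
    ∫ p in A ×ˢ Ioo l r, f p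
      = (∫ p in A ×ˢ Ioo l m, f p) + ∫ p in A ×ˢ Ioo m r, f p := by
  have hnull : (volume : Measure (ℝ × ℝ)) (A ×ˢ ({m} : Set ℝ)) = 0 := by
    rw [Measure.volume_eq_prod, Measure.prod_prod]
    simp
  have hsub1 : A ×ˢ Ioo l m ⊆ A ×ˢ Ioo l r :=
    Set.prod_mono subset_rfl (Ioo_subset_Ioo le_rfl hmr.le)
  have hsub2 : A ×ˢ Ioo m r ⊆ A ×ˢ Ioo l r :=
    Set.prod_mono subset_rfl (Ioo_subset_Ioo hlm.le le_rfl)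
  have hae : A ×ˢ Ioo l r =ᵐ[volume] ((A ×ˢ Ioo l m) ∪ (A ×ˢ Ioo m r) : Set (ℝ × ℝ)) := by
    rw [ae_eq_set]
    constructor
    · refine measure_mono_null ?_ hnull
      rintro ⟨t, x⟩ ⟨⟨htA, hx⟩, hnot⟩
      rcases lt_trichotomy x m with hxm | hxm | hxm
      · exact absurd (Or.inl ⟨htA, ⟨hx.1, hxm⟩⟩) hnot
      · exact ⟨htA, hxm⟩
      · exact absurd (Or.inr ⟨htA, ⟨hxm, hx.2⟩⟩) hnot
    · exact measure_mono_null
        (fun p hp => (hp.2 (Set.union_subset hsub1 hsub2 hp.1)).elim) measure_empty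
  have hdisj : Disjoint (A ×ˢ Ioo l m) (A ×ˢ Ioo m r) := by
    rw [Set.disjoint_left]
    rintro ⟨t, x⟩ ⟨-, hx1⟩ ⟨-, hx2⟩
    exact absurd (hx1.2.trans hx2.1) (lt_irrefl x)
  rw [setIntegral_congr_set hae,
    setIntegral_union hdisj (hA.prod measurableSet_Ioo)
      (hf.mono_set hsub1) (hf.mono_set hsub2)]

/-- The derivative of a nondecreasing coefficient is nonnegative in the interior. -/
lemma aprime_nonneg (a a' : ℝ → ℝ) (ha : DegenCoeff a a')
    {x : ℝ} (hx : x ∈ Ioo (0:ℝ) 1) : 0 ≤ a' x := by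
  have hd := (ha.hasDeriv x ⟨hx.1, hx.2.le⟩).hasDerivWithinAt (s := Ioi x)
  rw [hasDerivWithinAt_iff_tendsto_slope] at hd
  have hset : Ioi x \ ({x} : Set ℝ) = Ioi x :=
    Set.diff_singleton_eq_self (by simp)
  rw [hset] at hd
  refine ge_of_tendsto hd ?_
  have h1 : ∀ᶠ y in 𝓝[Ioi x] x, y < 1 :=
    eventually_nhdsWithin_of_eventually_nhds (Filter.Tendsto.eventually_lt_const hx.2 tendsto_id)
  filter_upwards [h1, self_mem_nhdsWithin] with y hy1 hy2
  have hmono : a x ≤ a y :=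
    ha.mono ⟨hx.1.le, hx.2.le⟩ ⟨(hx.1.trans hy2).le, hy1.le⟩ (le_of_lt hy2)
  rw [slope_def_field]
  have : (0:ℝ) < y - x := by simpa using sub_pos.mpr (show x < y from hy2)
  exact div_nonneg (by linarith) this.le

lemma integrand_contAt (a a' : ℝ → ℝ) (ha : DegenCoeff a a')
    {y : ℝ} (hy : y ∈ Ioo (0:ℝ) 1) : ContinuousAt (fun z => z / a z) y := by
  have haC : ContinuousAt a y := ha.cont.continuousAt (Icc_mem_nhds hy.1 hy.2)
  exact continuousAt_id.div haC (ne_of_gt (ha.pos y ⟨hy.1, hy.2.le⟩))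

/-- Derivative of `ψ` on the left region. -/
lemma psi_deriv_left (a a' ψ : ℝ → ℝ) {α' β' : ℝ}
    (ha : DegenCoeff a a') (hψ : WeightPsi a α' β' ψ)
    (hα'1 : α' < 1) {x : ℝ} (hx : x ∈ Ioo (0:ℝ) α') :
    deriv ψ x = x / a x ∨ deriv ψ x = 0 := by
  have hx1 : x ∈ Ioo (0:ℝ) 1 := ⟨hx.1, hx.2.trans hα'1⟩
  have hmemnhds : Ioo (0:ℝ) α' ∈ 𝓝 x := Ioo_mem_nhds hx.1 hx.2
  have hcontOn : ContinuousOn (fun z => z / a z) (Ioo (0:ℝ) 1) :=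
    fun y hy => (integrand_contAt a a' ha hy).continuousWithinAt
  by_cases hI : IntervalIntegrable (fun z => z / a z) volume 0 x
  · left
    have hmeas : StronglyMeasurableAtFilter (fun z => z / a z) (𝓝 x) :=
      hcontOn.stronglyMeasurableAtFilter isOpen_Ioo x hx1
    have hG : HasDerivAt (fun u => ∫ z in (0:ℝ)..u, z / a z) (x / a x) x :=
      integral_hasDerivAt_right hI hmeas (integrand_contAt a a' ha hx1)
    have hEq : ψ =ᶠ[𝓝 x] fun u => ∫ z in (0:ℝ)..u, z / a z := by
      filter_upwards [hmemnhds] with z hz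
      exact hψ.left z ⟨hz.1.le, hz.2⟩
    rw [hEq.deriv_eq, hG.deriv]
  · right
    have hEq : ψ =ᶠ[𝓝 x] fun _ => (0:ℝ) := by
      filter_upwards [hmemnhds] with z hz
      have hnz : ¬ IntervalIntegrable (fun y => y / a y) volume 0 z := by
        intro hz'
        apply hI
        rcases le_total x z with hxz | hxz
        · refine hz'.mono_set ?_
          rw [uIcc_of_le hx.1.le, uIcc_of_le (hx.1.le.trans hxz)]
          exact Icc_subset_Icc le_rfl hxz
        · refine hz'.trans (b := z) ?_
          refine (hcontOn.mono ?_).intervalIntegrable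
          intro y hy
          rw [uIcc_of_le hxz] at hy
          exact ⟨hz.1.trans_le hy.1, lt_of_le_of_lt hy.2 hx1.2⟩
      rw [hψ.left z ⟨hz.1.le, hz.2⟩, intervalIntegral.integral_undef hnz]
    rw [hEq.deriv_eq, deriv_const]

/-- Derivative of `ψ` on the right region. -/
lemma psi_deriv_right (a a' ψ : ℝ → ℝ) {α' β' : ℝ}
    (ha : DegenCoeff a a') (hψ : WeightPsi a α' β' ψ)
    (hβ'0 : 0 < β') {x : ℝ} (hx : x ∈ Ioo β' 1) :
    deriv ψ x = -(x / a x) := by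
  have hx1 : x ∈ Ioo (0:ℝ) 1 := ⟨hβ'0.trans hx.1, hx.2⟩
  have hcontOn : ContinuousOn (fun z => z / a z) (Ioo (0:ℝ) 1) :=
    fun y hy => (integrand_contAt a a' ha hy).continuousWithinAt
  have hsub : uIcc β' x ⊆ Ioo (0:ℝ) 1 := by
    rw [uIcc_of_le hx.1.le]
    exact fun y hy => ⟨hβ'0.trans_le hy.1, lt_of_le_of_lt hy.2 hx.2⟩
  have hI : IntervalIntegrable (fun z => z / a z) volume β' x :=
    (hcontOn.mono hsub).intervalIntegrable
  have hmeas : StronglyMeasurableAtFilter (fun z => z / a z) (𝓝 x) :=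
    hcontOn.stronglyMeasurableAtFilter isOpen_Ioo x hx1
  have hG : HasDerivAt (fun u => ∫ z in β'..u, z / a z) (x / a x) x :=
    integral_hasDerivAt_right hI hmeas (integrand_contAt a a' ha hx1)
  have hEq : ψ =ᶠ[𝓝 x] fun u => -∫ z in β'..u, z / a z := by
    filter_upwards [Ioo_mem_nhds hx.1 hx.2] with z hz
    exact hψ.right z ⟨hz.1.le, hz.2.le⟩
  rw [hEq.deriv_eq]; exact (hG.neg).deriv

/-- The space derivative of `φ`. -/
lemma pderivX_phi (T : ℝ) (ψ : ℝ → ℝ) (lam t x : ℝ)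
    (hdiff : DifferentiableAt ℝ ψ x) :
    pderivX (phiFun T ψ lam) t x
      = thetaFun T t * (etaFun ψ lam x * (lam * deriv ψ x)) := by
  have h1 : HasDerivAt (fun y => lam * (psiSup ψ + ψ y)) (lam * deriv ψ x) x :=
    ((hdiff.hasDerivAt).const_add (psiSup ψ)).const_mul lam
  have h2 : HasDerivAt (fun y => exp (lam * (psiSup ψ + ψ y)))
      (exp (lam * (psiSup ψ + ψ x)) * (lam * deriv ψ x)) x := h1.exp
  have h3 : HasDerivAt (fun y => thetaFun T t *
      (exp (lam * (psiSup ψ + ψ y)) - exp (3 * (lam * psiSup ψ))))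
      (thetaFun T t * (exp (lam * (psiSup ψ + ψ x)) * (lam * deriv ψ x))) x :=
    (h2.sub_const _).const_mul _
  unfold pderivX phiFun etaFun
  exact h3.deriv

lemma theta_nonneg (T t : ℝ) : 0 ≤ thetaFun T t := by
  unfold thetaFun
  positivity

end Aux

theorem lower_bound_ax_term
    (T αw βw α' β' K : ℝ)
    (hT : 0 < T) (hαw : 0 < αw) (hαα' : αw < α') (hα'β' : α' < β')
    (hβ'β : β' < βw) (hβw : βw < 1)
    (a a' ψ : ℝ → ℝ)
    (ha : DegenCoeff a a')
    (hK : DegenWeak a a' K ∨ DegenStrong a a' K)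
    (hψ : WeightPsi a α' β' ψ) :
    ∃ C > (0:ℝ), ∀ lam > (0:ℝ), ∀ s > (0:ℝ),
      ∀ h v : ℝ → ℝ → ℝ,
        IntegrableOn (fun p : ℝ × ℝ => h p.1 p.2 ^ 2) (QSub T 0 1) →
        RegSol T a h v →
        (BdryWeak T v ∨ BdryStrong T a v) →
        IntegrableOn (fun p : ℝ × ℝ => a p.2 * (pderivX (phiFun T ψ lam) p.1 p.2) * a' p.2 * (pderivX (wFun T ψ lam s v) p.1 p.2) ^ 2) (QSub T 0 1) →
        IntegrableOn (fun p : ℝ × ℝ => a p.2 * (sigmaFun T ψ lam p.1 p.2) * (pderivX (wFun T ψ lam s v) p.1 p.2) ^ 2) (QSub T 0 α') →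
        IntegrableOn (fun p : ℝ × ℝ => (sigmaFun T ψ lam p.1 p.2) * (pderivX (wFun T ψ lam s v) p.1 p.2) ^ 2) (QSub T α' β') →
        -(s) * (∫ p in QSub T 0 1, a p.2 * (pderivX (phiFun T ψ lam) p.1 p.2) * a' p.2 * (pderivX (wFun T ψ lam s v) p.1 p.2) ^ 2) ≥
          -(K * lam * s) * (∫ p in QSub T 0 α', a p.2 * (sigmaFun T ψ lam p.1 p.2) * (pderivX (wFun T ψ lam s v) p.1 p.2) ^ 2)
          - C * lam * s * (∫ p in QSub T α' β', (sigmaFun T ψ lam p.1 p.2) * (pderivX (wFun T ψ lam s v) p.1 p.2) ^ 2) := by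
  classical
  have hKnn : 0 ≤ K := by
    rcases hK with hk | hk
    · exact hk.1
    · linarith [hk.1]
  have hKb : ∀ x ∈ Ioc (0:ℝ) 1, x * a' x ≤ K * a x := by
    rcases hK with hk | hk
    · exact hk.2.2
    · exact hk.2.2.1
  have hα'0 : 0 < α' := hαw.trans hαα'
  have hβ'1 : β' < 1 := hβ'β.trans hβw
  have hα'1 : α' < 1 := hα'β'.trans hβ'1
  have hβ'0 : 0 < β' := hα'0.trans hα'β'
  have hanonneg : ∀ x ∈ Ioo (0:ℝ) 1, 0 < a x := fun x hx => ha.pos x ⟨hx.1, hx.2.le⟩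
  have hderivCont : ContinuousOn (deriv ψ) (Ioo (0:ℝ) 1) :=
    (hψ.smooth.mono Ioo_subset_Icc_self).continuousOn_deriv_of_isOpen isOpen_Ioo (by norm_num)
  have hsubmid : Icc α' β' ⊆ Ioo (0:ℝ) 1 :=
    fun y hy => ⟨hα'0.trans_le hy.1, lt_of_le_of_lt hy.2 hβ'1⟩
  have hFcont : ContinuousOn (fun x => |deriv ψ x| * (a x * a' x)) (Icc α' β') :=
    (hderivCont.mono hsubmid).abs.mul
      ((ha.cont.mono (hsubmid.trans Ioo_subset_Icc_self)).mul
        (ha.contDeriv.mono (fun y hy => ⟨hα'0.trans_le hy.1, hy.2.trans hβ'1.le⟩)))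
  obtain ⟨x₀, hx₀mem, hx₀'⟩ :=
    isCompact_Icc.exists_isMaxOn (nonempty_Icc.mpr hα'β'.le) hFcont
  have hx₀ : ∀ y ∈ Icc α' β', |deriv ψ y| * (a y * a' y) ≤ |deriv ψ x₀| * (a x₀ * a' x₀) :=
    fun y hy => hx₀' hy
  set M : ℝ := |deriv ψ x₀| * (a x₀ * a' x₀) with hMdef
  have hMnn : 0 ≤ M :=
    mul_nonneg (abs_nonneg _)
      (mul_nonneg (hanonneg x₀ (hsubmid hx₀mem)).le
        (aprime_nonneg a a' ha (hsubmid hx₀mem)))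
  refine ⟨M + 1, by linarith, ?_⟩
  intro lam hlam s hs h v hInth hreg hbdry hIntQ hIntA hIntB
  simp only [QSub] at hIntQ hIntA hIntB ⊢
  have hdiffψ : ∀ x ∈ Ioo (0:ℝ) 1, DifferentiableAt ℝ ψ x := fun x hx =>
    (hψ.smooth.contDiffAt (Icc_mem_nhds hx.1 hx.2)).differentiableAt (by norm_num)
  -- pointwise bound on the left region
  have hpt1 : ∀ p ∈ Ioo 0 T ×ˢ Ioo (0:ℝ) α',
      a p.2 * (pderivX (phiFun T ψ lam) p.1 p.2) * a' p.2 *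
        (pderivX (wFun T ψ lam s v) p.1 p.2) ^ 2
      ≤ K * lam * (a p.2 * (sigmaFun T ψ lam p.1 p.2) *
          (pderivX (wFun T ψ lam s v) p.1 p.2) ^ 2) := by
    rintro ⟨t, x⟩ hp
    obtain hx : x ∈ Ioo (0:ℝ) α' := hp.2
    have hx1 : x ∈ Ioo (0:ℝ) 1 := ⟨hx.1, hx.2.trans hα'1⟩
    have hax : 0 < a x := hanonneg x hx1
    have ha'x : 0 ≤ a' x := aprime_nonneg a a' ha hx1
    have hθ : 0 ≤ thetaFun T t := theta_nonneg T t
    have hη : 0 < etaFun ψ lam x := exp_pos _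
    have hw2 : (0:ℝ) ≤ pderivX (wFun T ψ lam s v) t x ^ 2 := sq_nonneg _
    simp only [sigmaFun]
    rw [pderivX_phi T ψ lam t x (hdiffψ x hx1)]
    rcases psi_deriv_left a a' ψ ha hψ hα'1 hx with hd | hd <;> rw [hd]
    · have hxa : x * a' x ≤ K * a x := hKb x ⟨hx1.1, hx1.2.le⟩
      have key : a x * (thetaFun T t * (etaFun ψ lam x * (lam * (x / a x)))) * a' x
          = lam * (thetaFun T t * etaFun ψ lam x) * (x * a' x) := by
        field_simp
      calc a x * (thetaFun T t * (etaFun ψ lam x * (lam * (x / a x)))) * a' x *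
            pderivX (wFun T ψ lam s v) t x ^ 2
          = lam * (thetaFun T t * etaFun ψ lam x) * (x * a' x) *
            pderivX (wFun T ψ lam s v) t x ^ 2 := by rw [key]
        _ ≤ lam * (thetaFun T t * etaFun ψ lam x) * (K * a x) *
            pderivX (wFun T ψ lam s v) t x ^ 2 := by
            refine mul_le_mul_of_nonneg_right
              (mul_le_mul_of_nonneg_left hxa (by positivity)) hw2
        _ = K * lam * (a x * (thetaFun T t * etaFun ψ lam x) *
            pderivX (wFun T ψ lam s v) t x ^ 2) := by ring
    · have hzero : a x * (thetaFun T t * (etaFun ψ lam x * (lam * 0))) * a' x *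
          pderivX (wFun T ψ lam s v) t x ^ 2 = 0 := by ring
      rw [hzero]
      exact mul_nonneg (mul_nonneg hKnn hlam.le)
        (mul_nonneg (mul_nonneg hax.le (by positivity)) hw2)
  -- pointwise bound on the middle region
  have hpt2 : ∀ p ∈ Ioo 0 T ×ˢ Ioo α' β',
      a p.2 * (pderivX (phiFun T ψ lam) p.1 p.2) * a' p.2 *
        (pderivX (wFun T ψ lam s v) p.1 p.2) ^ 2
      ≤ (M + 1) * lam * ((sigmaFun T ψ lam p.1 p.2) *
          (pderivX (wFun T ψ lam s v) p.1 p.2) ^ 2) := by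
    rintro ⟨t, x⟩ hp
    obtain hx : x ∈ Ioo α' β' := hp.2
    have hx1 : x ∈ Ioo (0:ℝ) 1 := hsubmid ⟨hx.1.le, hx.2.le⟩
    have hax : 0 < a x := hanonneg x hx1
    have ha'x : 0 ≤ a' x := aprime_nonneg a a' ha hx1
    have hθ : 0 ≤ thetaFun T t := theta_nonneg T t
    have hη : 0 < etaFun ψ lam x := exp_pos _
    have hw2 : (0:ℝ) ≤ pderivX (wFun T ψ lam s v) t x ^ 2 := sq_nonneg _
    have hbound : deriv ψ x * (a x * a' x) ≤ M + 1 := by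
      have h1 : deriv ψ x * (a x * a' x) ≤ |deriv ψ x| * (a x * a' x) :=
        mul_le_mul_of_nonneg_right (le_abs_self _) (mul_nonneg hax.le ha'x)
      have h2 := hx₀ x ⟨hx.1.le, hx.2.le⟩
      linarith
    simp only [sigmaFun]
    rw [pderivX_phi T ψ lam t x (hdiffψ x hx1)]
    calc a x * (thetaFun T t * (etaFun ψ lam x * (lam * deriv ψ x))) * a' x *
          pderivX (wFun T ψ lam s v) t x ^ 2
        = lam * (thetaFun T t * etaFun ψ lam x) * (deriv ψ x * (a x * a' x)) *
          pderivX (wFun T ψ lam s v) t x ^ 2 := by ring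
      _ ≤ lam * (thetaFun T t * etaFun ψ lam x) * (M + 1) *
          pderivX (wFun T ψ lam s v) t x ^ 2 := by
          refine mul_le_mul_of_nonneg_right
            (mul_le_mul_of_nonneg_left hbound (by positivity)) hw2
      _ = (M + 1) * lam * (thetaFun T t * etaFun ψ lam x *
          pderivX (wFun T ψ lam s v) t x ^ 2) := by ring
  -- pointwise bound on the right region
  have hpt3 : ∀ p ∈ Ioo 0 T ×ˢ Ioo β' 1,
      a p.2 * (pderivX (phiFun T ψ lam) p.1 p.2) * a' p.2 *
        (pderivX (wFun T ψ lam s v) p.1 p.2) ^ 2 ≤ 0 := by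
    rintro ⟨t, x⟩ hp
    obtain hx : x ∈ Ioo β' 1 := hp.2
    have hx1 : x ∈ Ioo (0:ℝ) 1 := ⟨hβ'0.trans hx.1, hx.2⟩
    have hax : 0 < a x := hanonneg x hx1
    have ha'x : 0 ≤ a' x := aprime_nonneg a a' ha hx1
    have hθ : 0 ≤ thetaFun T t := theta_nonneg T t
    have hη : 0 < etaFun ψ lam x := exp_pos _
    have hw2 : (0:ℝ) ≤ pderivX (wFun T ψ lam s v) t x ^ 2 := sq_nonneg _
    rw [pderivX_phi T ψ lam t x (hdiffψ x hx1),
      psi_deriv_right a a' ψ ha hψ hβ'0 hx]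
    have key : a x * (thetaFun T t * (etaFun ψ lam x * (lam * -(x / a x)))) * a' x *
        pderivX (wFun T ψ lam s v) t x ^ 2
        = -(lam * (thetaFun T t * etaFun ψ lam x) * (x * a' x) *
            pderivX (wFun T ψ lam s v) t x ^ 2) := by
      field_simp
    rw [key, neg_nonpos]
    exact mul_nonneg (mul_nonneg (by positivity)
      (mul_nonneg hx1.1.le ha'x)) hw2
  -- split the integral
  have hsplitA := integral_split_mid
    (fun p : ℝ × ℝ => a p.2 * (pderivX (phiFun T ψ lam) p.1 p.2) * a' p.2 *
      (pderivX (wFun T ψ lam s v) p.1 p.2) ^ 2)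
    (Ioo 0 T) measurableSet_Ioo hβ'0 hβ'1 hIntQ
  have hsplitB := integral_split_mid
    (fun p : ℝ × ℝ => a p.2 * (pderivX (phiFun T ψ lam) p.1 p.2) * a' p.2 *
      (pderivX (wFun T ψ lam s v) p.1 p.2) ^ 2)
    (Ioo 0 T) measurableSet_Ioo hα'0 hα'β'
    (hIntQ.mono_set (Set.prod_mono subset_rfl (Ioo_subset_Ioo le_rfl hβ'1.le)))
  have hI3 : (∫ p in Ioo 0 T ×ˢ Ioo β' 1,
      a p.2 * (pderivX (phiFun T ψ lam) p.1 p.2) * a' p.2 *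
        (pderivX (wFun T ψ lam s v) p.1 p.2) ^ 2) ≤ 0 :=
    setIntegral_nonpos (measurableSet_Ioo.prod measurableSet_Ioo) hpt3
  have hI1 : (∫ p in Ioo 0 T ×ˢ Ioo (0:ℝ) α',
      a p.2 * (pderivX (phiFun T ψ lam) p.1 p.2) * a' p.2 *
        (pderivX (wFun T ψ lam s v) p.1 p.2) ^ 2)
      ≤ K * lam * ∫ p in Ioo 0 T ×ˢ Ioo (0:ℝ) α',
          a p.2 * (sigmaFun T ψ lam p.1 p.2) *
            (pderivX (wFun T ψ lam s v) p.1 p.2) ^ 2 := by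
    rw [← integral_const_mul]
    exact setIntegral_mono_on
      (hIntQ.mono_set (Set.prod_mono subset_rfl (Ioo_subset_Ioo le_rfl (hα'1.le))))
      (hIntA.const_mul _)
      (measurableSet_Ioo.prod measurableSet_Ioo) hpt1
  have hI2 : (∫ p in Ioo 0 T ×ˢ Ioo α' β',
      a p.2 * (pderivX (phiFun T ψ lam) p.1 p.2) * a' p.2 *
        (pderivX (wFun T ψ lam s v) p.1 p.2) ^ 2)
      ≤ (M + 1) * lam * ∫ p in Ioo 0 T ×ˢ Ioo α' β',
          (sigmaFun T ψ lam p.1 p.2) *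
            (pderivX (wFun T ψ lam s v) p.1 p.2) ^ 2 := by
    rw [← integral_const_mul]
    refine setIntegral_mono_on ?_ (hIntB.const_mul _)
      (measurableSet_Ioo.prod measurableSet_Ioo) hpt2
    exact hIntQ.mono_set
      (Set.prod_mono subset_rfl (Ioo_subset_Ioo hα'0.le hβ'1.le))
  rw [ge_iff_le, hsplitA, hsplitB]
  set A := ∫ p in Ioo 0 T ×ˢ Ioo (0:ℝ) α',
      a p.2 * (sigmaFun T ψ lam p.1 p.2) *
        (pderivX (wFun T ψ lam s v) p.1 p.2) ^ 2
  set B := ∫ p in Ioo 0 T ×ˢ Ioo α' β',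
      (sigmaFun T ψ lam p.1 p.2) *
        (pderivX (wFun T ψ lam s v) p.1 p.2) ^ 2
  set I1 := ∫ p in Ioo 0 T ×ˢ Ioo (0:ℝ) α',
      a p.2 * (pderivX (phiFun T ψ lam) p.1 p.2) * a' p.2 *
        (pderivX (wFun T ψ lam s v) p.1 p.2) ^ 2
  set I2 := ∫ p in Ioo 0 T ×ˢ Ioo α' β',
      a p.2 * (pderivX (phiFun T ψ lam) p.1 p.2) * a' p.2 *
        (pderivX (wFun T ψ lam s v) p.1 p.2) ^ 2
  set I3 := ∫ p in Ioo 0 T ×ˢ Ioo β' 1,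
      a p.2 * (pderivX (phiFun T ψ lam) p.1 p.2) * a' p.2 *
        (pderivX (wFun T ψ lam s v) p.1 p.2) ^ 2
  have hsum : I1 + I2 + I3 ≤ K * lam * A + (M + 1) * lam * B := by linarith
  nlinarith [mul_le_mul_of_nonneg_left hsum hs.le]
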